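/- Let f, g ∈ L^r(I) for some 1 < r < ∞ on a bounded closed nondegenerate interval I with f ≤ g a.e. Then τ_r^f ≤ τ_r^g, with equality if and only if f = g almost everywhere, where τ_r^h denotes the unique minimizer of t ↦ ‖h − t‖_r. -/

import Mathlib

open Set MeasureTheory
open scoped ENNReal NNReal

noncomputable def stmt13psi (r v : ℝ) : ℝ := (SignType.sign v : ℝ) * |v| ^ (r - 1)

lemma stmt13psi_zero (r : ℝ) : stmt13psi r 0 = 0 := by simp [stmt13psi]

lemma stmt13psi_of_pos {r v : ℝ} (hv : 0 < v) : stmt13psi r v = v ^ (r - 1) := by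
  simp [stmt13psi, hv, abs_of_pos hv]

lemma stmt13psi_neg (r v : ℝ) : stmt13psi r (-v) = - stmt13psi r v := by
  rcases lt_trichotomy v 0 with h | h | h
  · simp [stmt13psi, h, neg_pos.2 h]
  · simp [h, stmt13psi_zero]
  · simp [stmt13psi, h, neg_neg_iff_pos.2 h]

lemma stmt13psi_abs {r v : ℝ} (hr : 1 < r) : |stmt13psi r v| = |v| ^ (r - 1) := by
  rcases lt_trichotomy v 0 with h | h | h
  · rw [stmt13psi, abs_mul]
    simp [h, abs_of_pos (Real.rpow_pos_of_pos (abs_pos.2 h.ne) _)]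
  · simp [h, stmt13psi_zero, Real.zero_rpow (by linarith : r - 1 ≠ 0)]
  · rw [stmt13psi, abs_mul]
    simp [h, abs_of_pos (Real.rpow_pos_of_pos (abs_pos.2 h.ne') _)]

lemma stmt13psi_strictMono {r : ℝ} (hr : 1 < r) : StrictMono (stmt13psi r) := by
  apply strictMono_of_odd_strictMonoOn_nonneg (fun x => stmt13psi_neg r x)
  intro x hx y hy hxy
  simp only [mem_Ici] at hx hy
  rcases eq_or_lt_of_le hx with h | h
  · rw [← h, stmt13psi_zero, stmt13psi_of_pos (h ▸ hxy)]
    exact Real.rpow_pos_of_pos (h ▸ hxy) _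
  · rw [stmt13psi_of_pos h, stmt13psi_of_pos (h.trans hxy)]
    exact Real.rpow_lt_rpow h.le hxy (by linarith)

lemma stmt13psi_continuous {r : ℝ} (hr : 1 < r) : Continuous (stmt13psi r) := by
  rw [continuous_iff_continuousAt]
  intro v
  rcases eq_or_ne v 0 with rfl | hv
  · rw [ContinuousAt, stmt13psi_zero]
    have h1 : Filter.Tendsto (fun u : ℝ => |u| ^ (r - 1)) (nhds 0) (nhds 0) := by
      have := (continuous_abs.rpow_const (fun x => Or.inr (by linarith : (0:ℝ) ≤ r - 1))).tendsto 0
      simpa [Real.zero_rpow (by linarith : r - 1 ≠ 0)] using this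
    exact squeeze_zero_norm (fun u => le_of_eq (by rw [Real.norm_eq_abs, stmt13psi_abs hr])) h1
  · have hev : ∀ᶠ u in nhds v, stmt13psi r u = (SignType.sign v : ℝ) * |u| ^ (r - 1) := by
      rcases hv.lt_or_gt with h | h
      · filter_upwards [eventually_lt_nhds h] with u hu
        simp [stmt13psi, hu, h]
      · filter_upwards [eventually_gt_nhds h] with u hu
        simp [stmt13psi, hu, h]
    refine ContinuousAt.congr ?_ (Filter.EventuallyEq.symm hev)
    exact (continuous_const.mul (continuous_abs.rpow_const
      (fun x => Or.inr (by linarith)))).continuousAt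

lemma stmt13_hasDerivAt_abs_rpow {r : ℝ} (hr : 1 < r) (v : ℝ) :
    HasDerivAt (fun u : ℝ => |u| ^ r) (r * stmt13psi r v) v := by
  rcases eq_or_ne v 0 with rfl | hv
  · rw [stmt13psi_zero, mul_zero]
    rw [hasDerivAt_iff_tendsto_slope]
    have hb : ∀ᶠ u in nhdsWithin (0:ℝ) {(0:ℝ)}ᶜ,
        ‖slope (fun u : ℝ => |u| ^ r) 0 u‖ ≤ |u| ^ (r - 1) := by
      filter_upwards [self_mem_nhdsWithin] with u (hu : u ≠ 0)
      have h0 : |(0:ℝ)| ^ r = 0 := by simp [Real.zero_rpow (by linarith : r ≠ 0)]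
      rw [slope_def_field, h0, sub_zero, sub_zero, Real.norm_eq_abs, abs_div,
        abs_of_nonneg (Real.rpow_nonneg (abs_nonneg u) r)]
      rw [div_le_iff₀ (abs_pos.2 hu)]
      rw [← Real.rpow_add_one (abs_ne_zero.2 hu) (r - 1)]
      simp
    have hg : Filter.Tendsto (fun u : ℝ => |u| ^ (r - 1)) (nhdsWithin (0:ℝ) {(0:ℝ)}ᶜ) (nhds 0) := by
      apply Filter.Tendsto.mono_left _ nhdsWithin_le_nhds
      have := (continuous_abs.rpow_const (fun x => Or.inr (by linarith : (0:ℝ) ≤ r - 1))).tendsto 0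
      simpa [Real.zero_rpow (by linarith : r - 1 ≠ 0)] using this
    exact squeeze_zero_norm' hb hg
  · have h1 : HasDerivAt (fun x : ℝ => x ^ r) (r * |v| ^ (r - 1)) |v| :=
      Real.hasDerivAt_rpow_const (Or.inl (abs_ne_zero.2 hv))
    have h2 := h1.comp v (hasDerivAt_abs hv)
    refine h2.congr_deriv ?_
    rcases hv.lt_or_gt with h | h <;> simp [stmt13psi, h] <;> ring

lemma stmt13_hasDerivAt_param {r : ℝ} (hr : 1 < r) (u t₀ : ℝ) :
    HasDerivAt (fun t : ℝ => |u - t| ^ r) (-(r * stmt13psi r (u - t₀))) t₀ := by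
  have h1 := (stmt13_hasDerivAt_abs_rpow hr (u - t₀)).comp t₀ ((hasDerivAt_id t₀).const_sub u)
  refine h1.congr_deriv ?_
  ring

variable {r : ℝ} {μ : MeasureTheory.Measure ℝ} {h : ℝ → ℝ}

lemma stmt13_int_rpow (hr : 1 < r) (hL : MemLp h (ENNReal.ofReal r) μ) [IsFiniteMeasure μ]
    (t : ℝ) : Integrable (fun x => |h x - t| ^ r) μ := by
  have hmem : MemLp (fun x => h x - t) (ENNReal.ofReal r) μ := hL.sub (memLp_const t)
  have := hmem.integrable_norm_rpow (by simp [ENNReal.ofReal_pos]; linarith) ENNReal.ofReal_ne_top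
  simpa [Real.norm_eq_abs, ENNReal.toReal_ofReal (by linarith : (0:ℝ) ≤ r)] using this

lemma stmt13_abs_rpow_le (hr : 1 < r) (v : ℝ) : |v| ^ (r - 1) ≤ 1 + |v| ^ r := by
  rcases le_or_gt (|v|) 1 with h | h
  · have : |v| ^ (r - 1) ≤ 1 := Real.rpow_le_one (abs_nonneg v) h (by linarith)
    have h2 : (0:ℝ) ≤ |v| ^ r := Real.rpow_nonneg (abs_nonneg v) r
    linarith
  · have : |v| ^ (r - 1) ≤ |v| ^ r :=
      Real.rpow_le_rpow_of_exponent_le h.le (by linarith)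
    linarith

lemma stmt13_int_psi (hr : 1 < r) (hL : MemLp h (ENNReal.ofReal r) μ) [IsFiniteMeasure μ]
    (t : ℝ) : Integrable (fun x => stmt13psi r (h x - t)) μ := by
  have hmem : MemLp (fun x => h x - t) (ENNReal.ofReal r) μ := hL.sub (memLp_const t)
  refine Integrable.mono' ((integrable_const 1).add (stmt13_int_rpow hr hL t)) ?_ ?_
  · exact (stmt13psi_continuous hr).comp_aestronglyMeasurable hmem.aestronglyMeasurable
  · filter_upwards with x
    rw [Real.norm_eq_abs, stmt13psi_abs hr]
    exact stmt13_abs_rpow_le hr _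

lemma stmt13_hasDerivAt_integral (hr : 1 < r) (hL : MemLp h (ENNReal.ofReal r) μ)
    [IsFiniteMeasure μ] (t₀ : ℝ) :
    HasDerivAt (fun t => ∫ x, |h x - t| ^ r ∂μ)
      (∫ x, -(r * stmt13psi r (h x - t₀)) ∂μ) t₀ := by
  have hr0 : (0:ℝ) < r := by linarith
  set bound : ℝ → ℝ := fun x => r * (2 ^ r * (1 + |h x - t₀| ^ r)) with hbound
  have hboundint : Integrable bound μ :=
    (((integrable_const 1).add (stmt13_int_rpow hr hL t₀)).const_mul (2 ^ r)).const_mul r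
  refine (hasDerivAt_integral_of_dominated_loc_of_lip (F := fun t x => |h x - t| ^ r)
    (F' := fun x => -(r * stmt13psi r (h x - t₀))) (bound := bound) (Metric.ball_mem_nhds t₀ one_pos) ?_ ?_ ?_ ?_ ?_ ?_).2
  · filter_upwards with t
    exact (stmt13_int_rpow hr hL t).aestronglyMeasurable
  · exact stmt13_int_rpow hr hL t₀
  · exact (((stmt13psi_continuous hr).comp_aestronglyMeasurable
      (hL.sub (memLp_const t₀)).aestronglyMeasurable).const_mul r).neg
  · filter_upwards with x
    apply (convex_ball t₀ 1).lipschitzOnWith_of_nnnorm_hasDerivWithin_le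
      (f' := fun t => -(r * stmt13psi r (h x - t)))
      (fun t _ => (stmt13_hasDerivAt_param hr (h x) t).hasDerivWithinAt)
    intro t ht
    rw [← NNReal.coe_le_coe, coe_nnnorm, Real.coe_nnabs]
    rw [Real.norm_eq_abs, abs_neg, abs_mul, abs_of_pos hr0, stmt13psi_abs hr]
    rw [hbound, abs_of_pos (by positivity : (0:ℝ) < r * (2 ^ r * (1 + |h x - t₀| ^ r)))]
    have h1 : |h x - t| ≤ |h x - t₀| + 1 := by
      have := abs_sub_abs_le_abs_sub (h x - t) (h x - t₀)
      have h2 : |(h x - t) - (h x - t₀)| = |t₀ - t| := by ring_nf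
      simp only [Metric.mem_ball, Real.dist_eq] at ht
      calc |h x - t| = |(h x - t₀) + (t₀ - t)| := by ring_nf
        _ ≤ |h x - t₀| + |t₀ - t| := abs_add_le _ _
        _ ≤ |h x - t₀| + 1 := by
            have : |t₀ - t| = |t - t₀| := abs_sub_comm _ _
            linarith [le_of_lt ht]
    have h2 : |h x - t| ^ (r - 1) ≤ (|h x - t₀| + 1) ^ (r - 1) :=
      Real.rpow_le_rpow (abs_nonneg _) h1 (by linarith)
    have h3 : (|h x - t₀| + 1) ^ (r - 1) ≤ (|h x - t₀| + 1) ^ r :=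
      Real.rpow_le_rpow_of_exponent_le (by linarith [abs_nonneg (h x - t₀)]) (by linarith)
    have h4 : (|h x - t₀| + 1) ^ r ≤ 2 ^ r * (1 + |h x - t₀| ^ r) := by
      have hM : |h x - t₀| + 1 ≤ 2 * max 1 (|h x - t₀|) := by
        rcases le_total (|h x - t₀|) 1 with hc | hc
        · have := le_max_left (1:ℝ) (|h x - t₀|); linarith
        · have := le_max_right (1:ℝ) (|h x - t₀|); linarith
      calc (|h x - t₀| + 1) ^ r ≤ (2 * max 1 (|h x - t₀|)) ^ r :=
            Real.rpow_le_rpow (by positivity) hM hr0.le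
        _ = 2 ^ r * (max 1 (|h x - t₀|)) ^ r := by
            rw [Real.mul_rpow (by norm_num) (le_max_of_le_left zero_le_one)]
        _ ≤ 2 ^ r * (1 + |h x - t₀| ^ r) := by
            apply mul_le_mul_of_nonneg_left _ (Real.rpow_nonneg (by norm_num) r)
            rcases max_cases (1:ℝ) (|h x - t₀|) with ⟨he, _⟩ | ⟨he, _⟩ <;> rw [he]
            · simp [Real.one_rpow]; positivity
            · linarith [Real.rpow_nonneg (abs_nonneg (h x - t₀)) r,
                (by norm_num : (0:ℝ) ≤ 1)]
    exact mul_le_mul_of_nonneg_left (le_trans h2 (le_trans h3 h4)) hr0.le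
  · exact hboundint
  · filter_upwards with x
    exact stmt13_hasDerivAt_param hr (h x) t₀

lemma stmt13_lint_eq (hr : 1 < r) (hL : MemLp h (ENNReal.ofReal r) μ) [IsFiniteMeasure μ]
    (s : ℝ) :
    ∫⁻ x, ‖h x - s‖ₑ ^ r ∂μ = ENNReal.ofReal (∫ x, |h x - s| ^ r ∂μ) := by
  rw [ofReal_integral_eq_lintegral_ofReal (stmt13_int_rpow hr hL s)
    (Filter.Eventually.of_forall fun x => Real.rpow_nonneg (abs_nonneg _) r)]
  apply lintegral_congr
  intro x
  rw [← ofReal_norm_eq_enorm, ENNReal.ofReal_rpow_of_nonneg (norm_nonneg _)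
    (by linarith : (0:ℝ) ≤ r), Real.norm_eq_abs]

lemma stmt13_integral_min (hr : 1 < r) (hL : MemLp h (ENNReal.ofReal r) μ) [IsFiniteMeasure μ]
    {τ : ℝ}
    (hτ : ∀ t, eLpNorm (fun x => h x - τ) (ENNReal.ofReal r) μ
        ≤ eLpNorm (fun x => h x - t) (ENNReal.ofReal r) μ) (t : ℝ) :
    ∫ x, |h x - τ| ^ r ∂μ ≤ ∫ x, |h x - t| ^ r ∂μ := by
  have hr0 : (0:ℝ) < r := by linarith
  have hp0 : (ENNReal.ofReal r) ≠ 0 := by simp [ENNReal.ofReal_pos]; linarith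
  have := hτ t
  rw [eLpNorm_eq_lintegral_rpow_enorm_toReal hp0 ENNReal.ofReal_ne_top,
    eLpNorm_eq_lintegral_rpow_enorm_toReal hp0 ENNReal.ofReal_ne_top,
    ENNReal.toReal_ofReal hr0.le] at this
  rw [ENNReal.rpow_le_rpow_iff (by positivity : (0:ℝ) < 1 / r)] at this
  rw [stmt13_lint_eq hr hL τ, stmt13_lint_eq hr hL t,
    ENNReal.ofReal_le_ofReal_iff (integral_nonneg fun x => Real.rpow_nonneg (abs_nonneg _) r)]
    at this
  exact this

lemma stmt13_foc (hr : 1 < r) (hL : MemLp h (ENNReal.ofReal r) μ) [IsFiniteMeasure μ]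
    {τ : ℝ}
    (hτ : ∀ t, eLpNorm (fun x => h x - τ) (ENNReal.ofReal r) μ
        ≤ eLpNorm (fun x => h x - t) (ENNReal.ofReal r) μ) :
    ∫ x, stmt13psi r (h x - τ) ∂μ = 0 := by
  have hmin : IsLocalMin (fun t => ∫ x, |h x - t| ^ r ∂μ) τ :=
    Filter.Eventually.of_forall (stmt13_integral_min hr hL hτ)
  have hzero := hmin.hasDerivAt_eq_zero (stmt13_hasDerivAt_integral hr hL τ)
  have h2 : -(r * ∫ x, stmt13psi r (h x - τ) ∂μ) = 0 := by
    rw [← hzero, integral_neg, integral_const_mul]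
  have hr0 : r ≠ 0 := by linarith
  have h3 : r * ∫ x, stmt13psi r (h x - τ) ∂μ = 0 := by linarith
  exact (mul_eq_zero.1 h3).resolve_left hr0

theorem stmt13 (a b : ℝ) (hab : a < b) (f g : ℝ → ℝ) (r : ℝ) (hr : 1 < r)
    (hLf : MemLp f (ENNReal.ofReal r) (volume.restrict (Set.Icc a b)))
    (hLg : MemLp g (ENNReal.ofReal r) (volume.restrict (Set.Icc a b)))
    (hfg : f ≤ᵐ[volume.restrict (Set.Icc a b)] g)
    (τf τg : ℝ)
    (hτf : ∀ t : ℝ,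
        eLpNorm (fun x => f x - τf) (ENNReal.ofReal r) (volume.restrict (Set.Icc a b))
          ≤ eLpNorm (fun x => f x - t) (ENNReal.ofReal r) (volume.restrict (Set.Icc a b)))
    (hτg : ∀ t : ℝ,
        eLpNorm (fun x => g x - τg) (ENNReal.ofReal r) (volume.restrict (Set.Icc a b))
          ≤ eLpNorm (fun x => g x - t) (ENNReal.ofReal r) (volume.restrict (Set.Icc a b))) :
    τf ≤ τg ∧ (τf = τg ↔ f =ᵐ[volume.restrict (Set.Icc a b)] g) := by
  set μ := volume.restrict (Set.Icc a b) with hμdef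
  haveI : IsFiniteMeasure μ := by
    constructor
    rw [hμdef, Measure.restrict_apply_univ, Real.volume_Icc]
    exact ENNReal.ofReal_lt_top
  have hμuniv : 0 < μ Set.univ := by
    rw [hμdef, Measure.restrict_apply_univ, Real.volume_Icc]
    exact ENNReal.ofReal_pos.2 (by linarith)
  -- first-order conditions
  have hF0 : ∫ x, stmt13psi r (f x - τf) ∂μ = 0 := stmt13_foc hr hLf hτf
  have hG0 : ∫ x, stmt13psi r (g x - τg) ∂μ = 0 := stmt13_foc hr hLg hτg
  have hpsiSM := stmt13psi_strictMono (r := r) hr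
  -- monotone comparison Φf t ≤ Φg t
  have hmono : ∀ t : ℝ, ∫ x, stmt13psi r (f x - t) ∂μ ≤ ∫ x, stmt13psi r (g x - t) ∂μ := by
    intro t
    refine integral_mono_ae (stmt13_int_psi hr hLf t) (stmt13_int_psi hr hLg t) ?_
    filter_upwards [hfg] with x hx
    exact hpsiSM.monotone (by linarith)
  -- strict antitonicity of Φg
  have hanti : ∀ s t : ℝ, s < t →
      ∫ x, stmt13psi r (g x - t) ∂μ < ∫ x, stmt13psi r (g x - s) ∂μ := by
    intro s t hst
    have hd : ∀ x, 0 < stmt13psi r (g x - s) - stmt13psi r (g x - t) := by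
      intro x
      have := hpsiSM (show g x - t < g x - s by linarith)
      linarith
    have hint : Integrable (fun x => stmt13psi r (g x - s) - stmt13psi r (g x - t)) μ :=
      (stmt13_int_psi hr hLg s).sub (stmt13_int_psi hr hLg t)
    have hpos : 0 < ∫ x, (stmt13psi r (g x - s) - stmt13psi r (g x - t)) ∂μ := by
      rw [integral_pos_iff_support_of_nonneg_ae
        (Filter.Eventually.of_forall fun x => (hd x).le) hint]
      have : Function.support (fun x => stmt13psi r (g x - s) - stmt13psi r (g x - t))
          = Set.univ := Set.eq_univ_of_forall fun x => Function.mem_support.2 (hd x).ne'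
      rw [this]
      exact hμuniv
    rw [integral_sub (stmt13_int_psi hr hLg s) (stmt13_int_psi hr hLg t)] at hpos
    linarith
  -- τf ≤ τg
  have hle : τf ≤ τg := by
    by_contra hlt
    push_neg at hlt
    have h1 := hanti τg τf hlt
    have h2 := hmono τf
    rw [hF0] at h2
    rw [hG0] at h1
    linarith
  refine ⟨hle, ?_, ?_⟩
  · -- τf = τg → f =ᵐ g
    intro heq
    subst heq
    have hdiff0 : ∫ x, (stmt13psi r (g x - τf) - stmt13psi r (f x - τf)) ∂μ = 0 := by
      rw [integral_sub (stmt13_int_psi hr hLg τf) (stmt13_int_psi hr hLf τf), hF0, hG0]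
      ring
    have hnn : 0 ≤ᵐ[μ] fun x => stmt13psi r (g x - τf) - stmt13psi r (f x - τf) := by
      filter_upwards [hfg] with x hx
      have := hpsiSM.monotone (show f x - τf ≤ g x - τf by linarith)
      simpa using sub_nonneg.2 this
    have := (integral_eq_zero_iff_of_nonneg_ae hnn
      ((stmt13_int_psi hr hLg τf).sub (stmt13_int_psi hr hLf τf))).1 hdiff0
    filter_upwards [this] with x hx
    have hx' : stmt13psi r (f x - τf) = stmt13psi r (g x - τf) := by
      simp only [Pi.zero_apply] at hx
      linarith
    have := hpsiSM.injective hx'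
    linarith
  · -- f =ᵐ g → τf = τg
    intro heq
    have hGf0 : ∫ x, stmt13psi r (g x - τf) ∂μ = 0 := by
      rw [← hF0]
      apply integral_congr_ae
      filter_upwards [heq] with x hx
      rw [hx]
    rcases lt_trichotomy τf τg with h | h | h
    · have := hanti τf τg h
      rw [hG0, hGf0] at this
      linarith
    · exact h
    · exact absurd h (not_lt.2 hle)
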